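/- Let K be a perfectoid analytic field. The projection o_{K'} → o_K/(p) (to the zeroth component) is surjective, and induces an isomorphism o_{K'}/(z̄) ≅ o_K/(p) for any z̄ ∈ o_{K'} with |z̄|' = p^{-1}. In particular the residue fields of K' and K are naturally isomorphic. -/

import Mathlib

open scoped NNReal

set_option synthInstance.maxHeartbeats 1000000
set_option maxHeartbeats 1000000

/-- The valuation ring `o_K` of an analytic field `K` (a field complete with respect to a
multiplicative nonarchimedean norm, given by a rank-one valuation). -/
noncomputable abbrev OK (K : Type*) [Field K] [Valued K ℝ≥0] : Subring K :=
  Valued.v.integer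

/-- `o_K/(p)`. -/
abbrev OKmodp (p : ℕ) (K : Type*) [Field K] [Valued K ℝ≥0] : Type _ :=
  OK K ⧸ Ideal.span {(p : OK K)}

/-- `K` is discretely valued: the norm group is generated by a single `γ < 1`. -/
def IsDiscretelyValued (K : Type*) [Field K] [Valued K ℝ≥0] : Prop :=
  ∃ γ : ℝ≥0, γ < 1 ∧ ∀ x : K, x ≠ 0 → ∃ n : ℤ, Valued.v x = γ ^ n

theorem charP_OKmodp (p : ℕ) [Fact p.Prime] (K : Type*) [Field K] [Valued K ℝ≥0]
    (hp : Valued.v (p : K) = (p : ℝ≥0)⁻¹) : CharP (OKmodp p K) p := by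
  refine CharP.quotient _ p ?_
  intro hu
  rcases isUnit_iff_exists_inv.mp hu with ⟨u, huu⟩
  have hcast : (((p : OK K) * u : OK K) : K) = (1 : K) := by rw [huu]; rfl
  have hple : ((p : OK K) : K) = (p : K) := by push_cast; ring
  have hu1 : Valued.v ((u : K)) ≤ 1 := u.2
  have h1 : Valued.v ((p : K)) * Valued.v ((u : K)) = 1 := by
    rw [← hple, ← Valued.v.map_mul]
    rw [show ((p : OK K) : K) * ((u : K)) = (((p : OK K) * u : OK K) : K) from rfl, hcast]
    exact Valued.v.map_one
  rw [hp] at h1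
  have hp1 : ((p : ℝ≥0))⁻¹ < 1 := by
    have h2 : (1 : ℝ≥0) < (p : ℝ≥0) := by
      exact_mod_cast Nat.one_lt_cast.mpr (Fact.out : p.Prime).one_lt
    exact inv_lt_one_of_one_lt₀ h2
  have : (p : ℝ≥0)⁻¹ * Valued.v ((u : K)) ≤ (p : ℝ≥0)⁻¹ * 1 := by
    exact mul_le_mul_of_nonneg_left hu1 (by positivity)
  rw [h1] at this
  simp at this
  exact absurd (lt_of_le_of_lt this hp1) (lt_irrefl _)

/-- The tilt `o_{K'} = lim← o_K/(p)` (inverse limit under Frobenius), realized as a subring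
of the product ring `Π_n o_K/(p)`. -/
noncomputable def TiltRing (p : ℕ) [Fact p.Prime] (K : Type*) [Field K] [Valued K ℝ≥0]
    (hp : Valued.v (p : K) = (p : ℝ≥0)⁻¹) : Subring (∀ _ : ℕ, OKmodp p K) where
  carrier := {x | ∀ n, x (n + 1) ^ p = x n}
  zero_mem' := by
    intro n
    simp only [Pi.zero_apply]
    exact zero_pow (Fact.out : p.Prime).ne_zero
  one_mem' := by intro n; simp
  add_mem' := by
    haveI := charP_OKmodp p K hp
    intro a b ha hb n
    simp only [Pi.add_apply]
    rw [add_pow_char, ha n, hb n]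
  mul_mem' := by
    intro a b ha hb n
    simp only [Pi.mul_apply]
    rw [mul_pow, ha n, hb n]
  neg_mem' := by
    haveI := charP_OKmodp p K hp
    intro a ha n
    simp only [Pi.neg_apply]
    rw [show (-(a (n+1))) = (-1) * a (n+1) by ring, mul_pow, neg_one_pow_char, ha n]
    ring

namespace TiltAux

variable {p : ℕ} [Fact p.Prime] {K : Type*} [Field K] [Valued K ℝ≥0]

lemma natCast_le_one (n : ℕ) : Valued.v (n : K) ≤ 1 := by
  induction n with
  | zero => simp
  | succ k ih =>
    push_cast
    exact le_trans (Valuation.map_add_le _ ih (by simp)) le_rfl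

lemma mem_span_iff (hp : Valued.v (p : K) = (p : ℝ≥0)⁻¹) (a : OK K) :
    a ∈ Ideal.span {(p : OK K)} ↔ Valued.v (a : K) ≤ (p : ℝ≥0)⁻¹ := by
  have hp0 : (p : ℝ≥0) ≠ 0 := Nat.cast_ne_zero.mpr (Fact.out : p.Prime).ne_zero
  have hpK0 : (p : K) ≠ 0 := by
    intro h
    rw [h, map_zero] at hp
    exact (inv_ne_zero hp0) hp.symm
  rw [Ideal.mem_span_singleton]
  constructor
  · rintro ⟨c, rfl⟩
    have hc : ((((p : OK K) * c : OK K)) : K) = (p : K) * (c : K) := by push_cast; ring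
    rw [hc, map_mul, hp]
    calc (p : ℝ≥0)⁻¹ * Valued.v (c : K) ≤ (p : ℝ≥0)⁻¹ * 1 := mul_le_mul_right c.2 _
    _ = (p : ℝ≥0)⁻¹ := mul_one _
  · intro h
    have hcmem : Valued.v ((a : K) / (p : K)) ≤ 1 := by
      rw [map_div₀, hp]
      have h2 : Valued.v (a : K) / (p : ℝ≥0)⁻¹ ≤ (p : ℝ≥0)⁻¹ / (p : ℝ≥0)⁻¹ := by gcongr
      rw [div_self (inv_ne_zero hp0)] at h2
      exact h2
    refine ⟨⟨(a : K) / (p : K), hcmem⟩, ?_⟩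
    apply Subtype.ext
    have : ((((p : OK K)) : K)) = (p : K) := by push_cast; ring
    show (a : K) = ((p : OK K) : K) * ((a : K) / (p : K))
    rw [this, mul_comm, div_mul_cancel₀ _ hpK0]

lemma mk_eq_mk_iff (hp : Valued.v (p : K) = (p : ℝ≥0)⁻¹) (a b : OK K) :
    Ideal.Quotient.mk (Ideal.span {(p : OK K)}) a = Ideal.Quotient.mk (Ideal.span {(p : OK K)}) b
      ↔ Valued.v ((a : K) - (b : K)) ≤ (p : ℝ≥0)⁻¹ := by
  rw [Ideal.Quotient.mk_eq_mk_iff_sub_mem, mem_span_iff hp]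
  norm_cast

lemma pow_p_sub_pow_p (hp : Valued.v (p : K) = (p : ℝ≥0)⁻¹) {u w : K}
    (hu : Valued.v u ≤ 1) (hw : Valued.v w ≤ 1) {t : ℝ≥0} (hd : Valued.v (u - w) ≤ t) :
    Valued.v (u ^ p - w ^ p) ≤ max (t ^ p) ((p : ℝ≥0)⁻¹ * t) := by
  have hprime : p.Prime := Fact.out
  have key := add_pow_prime_eq hprime (u - w) w
  rw [sub_add_cancel] at key
  have hdle1 : Valued.v (u - w) ≤ 1 :=
    le_trans (Valuation.map_sub _ _ _) (max_le hu hw)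
  have heq : u ^ p - w ^ p
      = (u - w) ^ p + (p : K) * ∑ k ∈ Finset.Ioo 0 p, (u - w) ^ k * w ^ (p - k) * ↑(p.choose k / p) := by
    have hs : ∑ k ∈ Finset.Ioo 0 p, (u - w) ^ k * w ^ (p - k) * ((p.choose k / p : ℕ) : K)
        = (u - w) * w * ∑ k ∈ Finset.Ioo 0 p,
            (u - w) ^ (k - 1) * w ^ (p - k - 1) * ((p.choose k / p : ℕ) : K) := by
      rw [Finset.mul_sum]
      refine Finset.sum_congr rfl fun k hk => ?_
      rw [Finset.mem_Ioo] at hk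
      obtain ⟨j, rfl⟩ : ∃ j, k = j + 1 := ⟨k - 1, by omega⟩
      obtain ⟨i, hi⟩ : ∃ i, p - (j + 1) = i + 1 := ⟨p - (j + 1) - 1, by omega⟩
      rw [hi]
      simp only [Nat.add_sub_cancel]
      ring
    rw [key, hs]; ring
  rw [heq]
  refine le_trans (Valuation.map_add _ _ _) (max_le_max ?_ ?_)
  · rw [map_pow]
    exact pow_le_pow_left' hd p
  · rw [map_mul, hp]
    refine mul_le_mul_right ?_ _
    refine le_trans (Valuation.map_sum_le _ (g := Valued.v (u - w)) fun k hk => ?_) hd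
    rw [Finset.mem_Ioo] at hk
    rw [map_mul, map_mul, map_pow]
    calc Valued.v (u - w) ^ k * Valued.v (w ^ (p - k)) * Valued.v ((p.choose k / p : ℕ) : K)
        ≤ Valued.v (u - w) ^ k * 1 * 1 := by
          refine mul_le_mul' (mul_le_mul' le_rfl ?_) (natCast_le_one _)
          rw [map_pow]; exact pow_le_one' hw _
      _ = Valued.v (u - w) ^ k := by ring
      _ ≤ Valued.v (u - w) ^ 1 := pow_le_pow_of_le_one zero_le hdle1 hk.1
      _ = Valued.v (u - w) := pow_one _

end TiltAux

namespace TiltAux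

variable {p : ℕ} [Fact p.Prime] {K : Type*} [Field K] [Valued K ℝ≥0]

lemma tilt_pow (hp : Valued.v (p : K) = (p : ℝ≥0)⁻¹) (x : TiltRing p K hp) (n k : ℕ) :
    x.1 (n + k) ^ p ^ k = x.1 n := by
  have hx : ∀ m, x.1 (m + 1) ^ p = x.1 m := x.2
  induction k with
  | zero => simp
  | succ k ih =>
    rw [pow_succ', pow_mul, show n + (k + 1) = (n + k) + 1 from rfl, hx (n + k)]
    exact ih

end TiltAux

/-- The defining property of the tilt norm `|x̄|' = |θ(x̄)|`: it vanishes at `0`, and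
for `x̄ = (x̄_n)_n` in the tilt, `|x̄|' = |x_n|^(p^n)` for any lift `x_n ∈ o_K` of the
`n`-th component `x̄_n` whose norm exceeds `|p| = p⁻¹`. -/
def IsTiltNorm (p : ℕ) [Fact p.Prime] (K : Type*) [Field K] [Valued K ℝ≥0]
    (hp : Valued.v (p : K) = (p : ℝ≥0)⁻¹)
    (N : TiltRing p K hp → ℝ≥0) : Prop :=
  N 0 = 0 ∧
  ∀ (x : TiltRing p K hp) (n : ℕ) (xn : OK K),
    Ideal.Quotient.mk (Ideal.span {(p : OK K)}) xn = x.val n →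
    (p : ℝ≥0)⁻¹ < Valued.v (xn : K) →
    N x = Valued.v (xn : K) ^ (p ^ n)

/-- For a perfectoid analytic field `K`, the projection `o_{K'} → o_K/(p)` to the zeroth
component is surjective, and for any `z̄ ∈ o_{K'}` with `|z̄|' = p⁻¹` its kernel is the
ideal generated by `z̄`, so that it induces an isomorphism `o_{K'}/(z̄) ≅ o_K/(p)`. -/
theorem tilt_proj_surjective_ker_span (p : ℕ) [Fact p.Prime] (K : Type*) [Field K]
    [Valued K ℝ≥0] [CompleteSpace K]
    (hp : Valued.v (p : K) = (p : ℝ≥0)⁻¹)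
    (hnd : ¬ IsDiscretelyValued K)
    (hfrob : ∀ a : OKmodp p K, ∃ b, b ^ p = a)
    (N : TiltRing p K hp → ℝ≥0) (hN : IsTiltNorm p K hp N) :
    Function.Surjective
      ((Pi.evalRingHom (fun _ : ℕ => OKmodp p K) 0).comp
        (Subring.subtype (TiltRing p K hp))) ∧
    ∀ z : TiltRing p K hp, N z = (p : ℝ≥0)⁻¹ →
      RingHom.ker ((Pi.evalRingHom (fun _ : ℕ => OKmodp p K) 0).comp
        (Subring.subtype (TiltRing p K hp))) = Ideal.span {z} := by
    classical
  have hprime : p.Prime := Fact.out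
  have hp0 : (p : ℝ≥0) ≠ 0 := Nat.cast_ne_zero.mpr hprime.ne_zero
  have hpinv_pos : (0 : ℝ≥0) < (p : ℝ≥0)⁻¹ := by positivity
  have hpinv_le1 : ((p : ℝ≥0))⁻¹ ≤ 1 := by
    have h2 : (1 : ℝ≥0) ≤ (p : ℝ≥0) := by
      exact_mod_cast Nat.one_le_cast.mpr hprime.one_lt.le
    exact inv_le_one_of_one_le₀ h2
  constructor
  · -- surjectivity
    intro a
    let f : ℕ → OKmodp p K := fun n => Nat.rec a (fun _ b => (hfrob b).choose) n
    have hf : f ∈ TiltRing p K hp := by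
      show ∀ n, f (n + 1) ^ p = f n
      intro n
      exact (hfrob (f n)).choose_spec
    exact ⟨⟨f, hf⟩, rfl⟩
  · intro z hz
    have hzne : z ≠ 0 := by
      intro h
      rw [h, hN.1] at hz
      exact (inv_ne_zero hp0) hz.symm
    have hbig : ∀ (m : ℕ) (b : OK K),
        Ideal.Quotient.mk (Ideal.span {(p : OK K)}) b = z.1 m → z.1 m ≠ 0 →
        (p : ℝ≥0)⁻¹ < Valued.v (b : K) := by
      intro m b hb hzm
      by_contra hle
      push_neg at hle
      exact hzm (hb ▸ (Ideal.Quotient.eq_zero_iff_mem.mpr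
        ((TiltAux.mem_span_iff hp b).mpr hle)))
    have hz0 : z.1 0 = 0 := by
      by_contra h0
      obtain ⟨b, hb⟩ := Ideal.Quotient.mk_surjective (z.1 0)
      have hbg := hbig 0 b hb h0
      have hNz := hN.2 z 0 b hb hbg
      simp only [pow_zero, pow_one] at hNz
      rw [hz] at hNz
      exact absurd hNz (ne_of_lt hbg)
    obtain ⟨m₀, hm₀⟩ : ∃ m, z.1 m ≠ 0 := by
      by_contra h
      push_neg at h
      exact hzne (Subtype.ext (funext h))
    have hm₀1 : 1 ≤ m₀ := by
      rcases Nat.eq_zero_or_pos m₀ with h | h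
      · rw [h] at hm₀; exact absurd hz0 hm₀
      · exact h
    have hzrel : ∀ m, z.1 (m + 1) ^ p = z.1 m := z.2
    have hznz' : ∀ k, z.1 (m₀ + k) ≠ 0 := by
      intro k
      induction k with
      | zero => simpa using hm₀
      | succ k ih =>
        intro hzero
        apply ih
        have hzero' : z.1 (m₀ + k + 1) = 0 := hzero
        rw [← hzrel (m₀ + k), hzero']
        exact zero_pow hprime.ne_zero
    have hznz : ∀ m, m₀ ≤ m → z.1 m ≠ 0 := by
      intro m hm
      obtain ⟨k, rfl⟩ := Nat.exists_eq_add_of_le hm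
      exact hznz' k
    set Z : ℕ → OK K := fun m => (Ideal.Quotient.mk_surjective (z.1 m)).choose with hZdef
    have hZ : ∀ m, Ideal.Quotient.mk (Ideal.span {(p : OK K)}) (Z m) = z.1 m :=
      fun m => (Ideal.Quotient.mk_surjective (z.1 m)).choose_spec
    set r : ℕ → ℝ≥0 := fun m => Valued.v ((Z m : K)) with hrdef
    have hrbig : ∀ m, m₀ ≤ m → (p : ℝ≥0)⁻¹ < r m :=
      fun m hm => hbig m (Z m) (hZ m) (hznz m hm)
    have hrpow : ∀ m, m₀ ≤ m → r m ^ p ^ m = (p : ℝ≥0)⁻¹ := by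
      intro m hm
      have hNz := hN.2 z m (Z m) (hZ m) (hrbig m hm)
      rw [hz] at hNz
      exact hNz.symm
    have hr1 : ∀ m, r m ≤ 1 := fun m => (Z m).2
    have hr0 : ∀ m, m₀ ≤ m → r m ≠ 0 :=
      fun m hm => ne_of_gt (lt_trans hpinv_pos (hrbig m hm))
    have hrlow : ∀ m, m₀ ≤ m → (p : ℝ≥0)⁻¹ ≤ r m := fun m hm => le_of_lt (hrbig m hm)
    have hrinv : ∀ m, m₀ ≤ m → (r m)⁻¹ ≤ (p : ℝ≥0) := by
      intro m hm
      have h := hrlow m hm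
      have h2 : (r m)⁻¹ ≤ (((p : ℝ≥0))⁻¹)⁻¹ := by gcongr
      rwa [inv_inv] at h2
    have hrp : ∀ m, m₀ ≤ m → (p : ℝ≥0)⁻¹ ≤ r m ^ p := by
      intro m hm
      have hple : p ≤ p ^ m := by
        calc p = p ^ 1 := (pow_one p).symm
        _ ≤ p ^ m := Nat.pow_le_pow_right hprime.pos (le_trans hm₀1 hm)
      calc (p : ℝ≥0)⁻¹ = r m ^ p ^ m := (hrpow m hm).symm
      _ ≤ r m ^ p := pow_le_pow_of_le_one zero_le (hr1 m) hple
    have hrpinv : ∀ m, m₀ ≤ m → (r m ^ p)⁻¹ ≤ (p : ℝ≥0) := by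
      intro m hm
      have h2 : (r m ^ p)⁻¹ ≤ (((p : ℝ≥0))⁻¹)⁻¹ := by gcongr; exact hrp m hm
      rwa [inv_inv] at h2
    have hZne : ∀ m, m₀ ≤ m → (Z m : K) ≠ 0 := by
      intro m hm h
      apply hr0 m hm
      rw [hrdef]
      simp only [h, map_zero]
    have hZpow : ∀ m, m₀ ≤ m → Valued.v ((Z (m + 1) : K) ^ p) = r m := by
      intro m hm
      have h1 : (r (m + 1) ^ p) ^ p ^ m = r m ^ p ^ m := by
        rw [← pow_mul, ← pow_succ', hrpow (m + 1) (by omega), hrpow m hm]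
      rw [map_pow]
      have hne : p ^ m ≠ 0 := pow_ne_zero _ hprime.ne_zero
      exact le_antisymm (le_of_pow_le_pow_left₀ hne zero_le h1.le)
        (le_of_pow_le_pow_left₀ hne zero_le h1.ge)
    -- kernel characterization
    ext x
    rw [RingHom.mem_ker, Ideal.mem_span_singleton]
    constructor
    · intro hx0'
      have hx0 : x.1 0 = 0 := hx0'
      have hxrel : ∀ m, x.1 (m + 1) ^ p = x.1 m := x.2
      set X : ℕ → OK K := fun m => (Ideal.Quotient.mk_surjective (x.1 m)).choose with hXdef
      have hX : ∀ m, Ideal.Quotient.mk (Ideal.span {(p : OK K)}) (X m) = x.1 m :=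
        fun m => (Ideal.Quotient.mk_surjective (x.1 m)).choose_spec
      have hXv : ∀ m, Valued.v ((X m : K)) ^ p ^ m ≤ (p : ℝ≥0)⁻¹ := by
        intro m
        have ht := TiltAux.tilt_pow hp x 0 m
        rw [zero_add] at ht
        have h1 : Ideal.Quotient.mk (Ideal.span {(p : OK K)}) ((X m) ^ p ^ m) = 0 := by
          rw [map_pow, hX m, ht, hx0]
        have h2 := (TiltAux.mem_span_iff hp _).mp (Ideal.Quotient.eq_zero_iff_mem.mp h1)
        have h3 : (((X m ^ p ^ m : OK K)) : K) = ((X m : K)) ^ p ^ m := by push_cast; ring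
        rwa [h3, map_pow] at h2
      have hXr : ∀ m, m₀ ≤ m → Valued.v ((X m : K)) ≤ r m := by
        intro m hm
        refine le_of_pow_le_pow_left₀ (n := p ^ m) (pow_ne_zero _ hprime.ne_zero) zero_le ?_
        rw [hrpow m hm]
        exact hXv m
      set q : ℕ → K := fun m => (X m : K) / (Z m : K) with hqdef
      have hq1 : ∀ m, m₀ ≤ m → Valued.v (q m) ≤ 1 := by
        intro m hm
        have h2 : Valued.v ((X m : K)) / r m ≤ r m / r m := by gcongr; exact hXr m hm
        rw [div_self (hr0 m hm)] at h2
        simpa [hqdef, map_div₀] using h2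
      have hZq : ∀ m, m₀ ≤ m → (Z m : K) * q m = (X m : K) := by
        intro m hm
        simp only [hqdef]
        rw [mul_comm]
        exact div_mul_cancel₀ _ (hZne m hm)
      have hstep : ∀ m, m₀ ≤ m →
          Valued.v (q (m + 1) ^ p - q m) ≤ (p : ℝ≥0)⁻¹ * (r m)⁻¹ := by
        intro m hm
        have hm1 : m₀ ≤ m + 1 := by omega
        have hA : Valued.v ((X (m + 1) : K) ^ p - (X m : K)) ≤ (p : ℝ≥0)⁻¹ := by
          have h1 : Ideal.Quotient.mk (Ideal.span {(p : OK K)}) ((X (m + 1)) ^ p)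
              = Ideal.Quotient.mk (Ideal.span {(p : OK K)}) (X m) := by
            rw [map_pow, hX (m + 1), hX m, hxrel m]
          have h2 := (TiltAux.mk_eq_mk_iff hp _ _).mp h1
          have h3 : (((X (m + 1) ^ p : OK K)) : K) = ((X (m + 1) : K)) ^ p := by
            push_cast; ring
          rwa [h3] at h2
        have hB : Valued.v ((Z (m + 1) : K) ^ p - (Z m : K)) ≤ (p : ℝ≥0)⁻¹ := by
          have h1 : Ideal.Quotient.mk (Ideal.span {(p : OK K)}) ((Z (m + 1)) ^ p)
              = Ideal.Quotient.mk (Ideal.span {(p : OK K)}) (Z m) := by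
            rw [map_pow, hZ (m + 1), hZ m, hzrel m]
          have h2 := (TiltAux.mk_eq_mk_iff hp _ _).mp h1
          have h3 : (((Z (m + 1) ^ p : OK K)) : K) = ((Z (m + 1) : K)) ^ p := by
            push_cast; ring
          rwa [h3] at h2
        have hnum : Valued.v ((X (m + 1) : K) ^ p * (Z m : K)
            - (Z (m + 1) : K) ^ p * (X m : K)) ≤ (p : ℝ≥0)⁻¹ * r m := by
          have hrw : (X (m + 1) : K) ^ p * (Z m : K) - (Z (m + 1) : K) ^ p * (X m : K)
              = ((X (m + 1) : K) ^ p - (X m : K)) * (Z m : K)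
                - ((Z (m + 1) : K) ^ p - (Z m : K)) * (X m : K) := by ring
          rw [hrw]
          refine le_trans (Valuation.map_sub _ _ _) (max_le ?_ ?_)
          · rw [map_mul]
            exact mul_le_mul' hA le_rfl
          · rw [map_mul]
            exact mul_le_mul' hB (hXr m hm)
        have hZnep : ((Z (m + 1) : K)) ^ p ≠ 0 := pow_ne_zero _ (hZne (m + 1) hm1)
        have heq : q (m + 1) ^ p - q m
            = ((X (m + 1) : K) ^ p * (Z m : K) - (Z (m + 1) : K) ^ p * (X m : K))
              / ((Z (m + 1) : K) ^ p * (Z m : K)) := by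
          simp only [hqdef]
          rw [div_pow, div_sub_div _ _ hZnep (hZne m hm)]
        rw [heq, map_div₀, map_mul, hZpow m hm]
        have hvz : Valued.v ((Z m : K)) = r m := rfl
        rw [hvz]
        have hrr : r m * r m ≠ 0 := mul_ne_zero (hr0 m hm) (hr0 m hm)
        rw [div_le_iff₀ (lt_of_le_of_ne zero_le (Ne.symm hrr))]
        calc Valued.v ((X (m + 1) : K) ^ p * (Z m : K) - (Z (m + 1) : K) ^ p * (X m : K))
            ≤ (p : ℝ≥0)⁻¹ * r m := hnum
          _ = (p : ℝ≥0)⁻¹ * (r m)⁻¹ * (r m * r m) := by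
              rw [mul_assoc, ← mul_assoc (r m)⁻¹, inv_mul_cancel₀ (hr0 m hm), one_mul]
      have hstep2 : ∀ m, m₀ ≤ m →
          Valued.v (q (m + 1) ^ (p * p) - q m ^ p) ≤ (p : ℝ≥0)⁻¹ := by
        intro m hm
        have hu : Valued.v (q (m + 1) ^ p) ≤ 1 := by
          rw [map_pow]; exact pow_le_one' (hq1 (m + 1) (by omega)) p
        have h1 := TiltAux.pow_p_sub_pow_p hp hu (hq1 m hm) (hstep m hm)
        rw [← pow_mul] at h1
        refine le_trans h1 (max_le ?_ ?_)
        · have e1 : ((p : ℝ≥0)⁻¹ * (r m)⁻¹) ^ p = ((p : ℝ≥0)⁻¹) ^ p * (r m ^ p)⁻¹ := by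
            rw [mul_pow, ← inv_pow]
          have e2 : ((p : ℝ≥0)⁻¹) ^ p ≤ ((p : ℝ≥0)⁻¹) ^ 2 :=
            pow_le_pow_of_le_one zero_le hpinv_le1 hprime.two_le
          rw [e1]
          refine le_trans (mul_le_mul' e2 (hrpinv m hm)) ?_
          rw [sq, mul_assoc, inv_mul_cancel₀ hp0, mul_one]
        · refine le_trans (mul_le_mul' le_rfl (mul_le_mul' le_rfl (hrinv m hm))) ?_
          rw [inv_mul_cancel₀ hp0, mul_one]
      -- construct y
      set m1 : ℕ := m₀ + 1 with hm1def
      set Qn : ℕ → OK K := fun n => ⟨q (m1 + n), hq1 (m1 + n) (by omega)⟩ with hQdef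
      set yv : ℕ → OKmodp p K :=
        fun n => Ideal.Quotient.mk (Ideal.span {(p : OK K)}) (Qn n) ^ p ^ m1 with hyvdef
      have hkey : ∀ n, Ideal.Quotient.mk (Ideal.span {(p : OK K)}) (Qn (n + 1)) ^ (p * p)
          = Ideal.Quotient.mk (Ideal.span {(p : OK K)}) (Qn n) ^ p := by
        intro n
        rw [← map_pow, ← map_pow, TiltAux.mk_eq_mk_iff hp]
        have h3 : (((Qn (n + 1) ^ (p * p) : OK K)) : K) = q (m1 + n + 1) ^ (p * p) := by
          push_cast; rfl
        have h4 : (((Qn n ^ p : OK K)) : K) = q (m1 + n) ^ p := by push_cast; rfl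
        rw [h3, h4]
        exact hstep2 (m1 + n) (by omega)
      have hyrel : ∀ n, yv (n + 1) ^ p = yv n := by
        intro n
        calc yv (n + 1) ^ p
            = (Ideal.Quotient.mk (Ideal.span {(p : OK K)}) (Qn (n + 1))) ^ (p ^ m1 * p) := by
              rw [hyvdef, ← pow_mul]
          _ = ((Ideal.Quotient.mk (Ideal.span {(p : OK K)}) (Qn (n + 1))) ^ (p * p)) ^ p ^ m₀ := by
              rw [← pow_mul]; congr 1; rw [hm1def]; ring
          _ = ((Ideal.Quotient.mk (Ideal.span {(p : OK K)}) (Qn n)) ^ p) ^ p ^ m₀ := by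
              rw [hkey n]
          _ = (Ideal.Quotient.mk (Ideal.span {(p : OK K)}) (Qn n)) ^ p ^ m1 := by
              rw [← pow_mul]; congr 1; rw [hm1def]; ring
          _ = yv n := rfl
      have hy : yv ∈ TiltRing p K hp := by
        show ∀ n, yv (n + 1) ^ p = yv n
        exact hyrel
      refine ⟨⟨yv, hy⟩, ?_⟩
      apply Subtype.ext
      funext n
      show x.1 n = z.1 n * yv n
      have hzp : z.1 n = Ideal.Quotient.mk (Ideal.span {(p : OK K)}) (Z (m1 + n)) ^ p ^ m1 := by
        rw [hZ (m1 + n)]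
        have ht := TiltAux.tilt_pow hp z n m1
        rw [show n + m1 = m1 + n by omega] at ht
        exact ht.symm
      have hxp : x.1 n = Ideal.Quotient.mk (Ideal.span {(p : OK K)}) (X (m1 + n)) ^ p ^ m1 := by
        rw [hX (m1 + n)]
        have ht := TiltAux.tilt_pow hp x n m1
        rw [show n + m1 = m1 + n by omega] at ht
        exact ht.symm
      rw [hxp, hzp, hyvdef]
      rw [← mul_pow, ← map_mul]
      congr 2
      apply Subtype.ext
      show (X (m1 + n) : K) = (Z (m1 + n) : K) * q (m1 + n)
      exact (hZq (m1 + n) (by omega)).symm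
    · rintro ⟨y, rfl⟩
      show z.1 0 * y.1 0 = 0
      rw [hz0, zero_mul]
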